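/- Let E ⊆ G be a Borel subset of the Cantor dyadic group and 0 < s < 1. If there exists a nonzero finite nonatomic Borel measure μ supported on E such that Σ_{k=1}^∞ k^{s-1} (\hatμ(k))^2 < ∞, then the Hausdorff dimension of E (in the metric ρ) is at least s. -/

import Mathlib

open MeasureTheory Filter Topology
open scoped ENNReal Classical

/-- The Cantor dyadic group: sequences of 0s and 1s with coordinatewise addition mod 2. -/
abbrev G : Type := ℕ → ZMod 2

/-- The metric ρ(x,y) = ∑_{i=1}^∞ 2^{-i} |x_i - y_i| (coordinates indexed from 0 here). -/
noncomputable def rho (x y : G) : ℝ :=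
  ∑' i : ℕ, (2:ℝ) ^ (-(i:ℝ) - 1) * (if x i = y i then 0 else 1)

/-- The subgroup G_n of sequences vanishing in the first n coordinates. -/
def Gset (n : ℕ) : Set G := {x | ∀ i < n, x i = 0}

/-- The coset K_n(x) = x + G_n of G_n containing x. -/
def Kset (n : ℕ) (x : G) : Set G := {y | x - y ∈ Gset n}

/-- The k-th Walsh function. -/
def walsh (k : ℕ) (x : G) : ℝ :=
  ∏ i ∈ Finset.range k, if k.testBit i ∧ x i = 1 then (-1 : ℝ) else 1

/-- The s-kernel: φ_s(0) = 0 and φ_s(x) = 2^{s(n-1)} for x ∈ G_{n-1} \ G_n,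
i.e. 2^{s j} where j is the first nonzero coordinate of x. -/
noncomputable def kernel (s : ℝ) (x : G) : ℝ :=
  if h : ∃ i, x i ≠ 0 then (2:ℝ) ^ (s * (Nat.find h : ℝ)) else 0

/-- The truncated s-kernel φ_s^n. -/
noncomputable def kernelTrunc (s : ℝ) (n : ℕ) (x : G) : ℝ :=
  if x = 0 then 0 else if x ∈ Gset n then (2:ℝ) ^ (s * (n:ℝ)) else kernel s x

/-- Walsh–Fourier coefficient of the s-kernel w.r.t. a (Haar) measure lam. -/
noncomputable def phiHat (s : ℝ) (lam : Measure G) (k : ℕ) : ℝ :=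
  ∫ x, kernel s x * walsh k x ∂lam

/-- Walsh–Fourier coefficient of the truncated s-kernel. -/
noncomputable def phiHatTrunc (s : ℝ) (n : ℕ) (lam : Measure G) (k : ℕ) : ℝ :=
  ∫ x, kernelTrunc s n x * walsh k x ∂lam

/-- Walsh–Fourier coefficient of a measure μ. -/
noncomputable def muHat (μ : Measure G) (k : ℕ) : ℝ :=
  ∫ x, walsh k x ∂μ

/-- s-potential of μ at x. -/
noncomputable def potential (s : ℝ) (μ : Measure G) (x : G) : ℝ≥0∞ :=
  ∫⁻ y, ENNReal.ofReal (kernel s (x - y)) ∂μ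

/-- s-energy of μ. -/
noncomputable def energy (s : ℝ) (μ : Measure G) : ℝ≥0∞ :=
  ∫⁻ x, ∫⁻ y, ENNReal.ofReal (kernel s (x - y)) ∂μ ∂μ

/-- truncated s-energy of μ. -/
noncomputable def energyTrunc (s : ℝ) (n : ℕ) (μ : Measure G) : ℝ≥0∞ :=
  ∫⁻ x, ∫⁻ y, ENNReal.ofReal (kernelTrunc s n (x - y)) ∂μ ∂μ

/-- Diameter of a set in the metric ρ, valued in ℝ≥0∞. -/
noncomputable def diamRho (I : Set G) : ℝ≥0∞ :=
  ⨆ x ∈ I, ⨆ y ∈ I, ENNReal.ofReal (rho x y)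

/-- Pre-Hausdorff measure H^s_δ via countable covers of ρ-diameter < δ. -/
noncomputable def Hdelta (s : ℝ) (δ : ℝ≥0∞) (A : Set G) : ℝ≥0∞ :=
  ⨅ (I : ℕ → Set G) (_ : A ⊆ ⋃ i, I i) (_ : ∀ i, diamRho (I i) < δ),
    ∑' i, diamRho (I i) ^ s

/-- s-dimensional Hausdorff measure w.r.t. the metric ρ. -/
noncomputable def Hmeas (s : ℝ) (A : Set G) : ℝ≥0∞ :=
  ⨆ (δ : ℝ≥0∞) (_ : 0 < δ), Hdelta s δ A

/-- Hausdorff dimension w.r.t. the metric ρ. -/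
noncomputable def hdimRho (A : Set G) : ℝ≥0∞ :=
  ⨆ (t : ℝ) (_ : Hmeas t A = ⊤), ENNReal.ofReal t



lemma zmod2_cases (a : ZMod 2) : a = 0 ∨ a = 1 := by fin_cases a <;> [exact Or.inl rfl; exact Or.inr rfl]

lemma measurableSet_Gset (n : ℕ) : MeasurableSet (Gset n) := by
  have : Gset n = ⋂ i ∈ Finset.range n, (fun x : G => x i) ⁻¹' {0} := by
    ext x; simp [Gset]
  rw [this]
  exact MeasurableSet.biInter (Finset.range n).countable_toSet
    (fun i _ => (measurable_pi_apply i) (measurableSet_singleton 0))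

lemma measurableSet_Kset (n : ℕ) (x : G) : MeasurableSet (Kset n x) := by
  have : Kset n x = (fun y : G => x - y) ⁻¹' (Gset n) := rfl
  rw [this]
  exact (measurable_const.sub measurable_id) (measurableSet_Gset n)

lemma measurable_walsh (k : ℕ) : Measurable (walsh k) := by
  apply Finset.measurable_prod
  intro i _
  exact (measurable_of_countable (fun a : ZMod 2 => if k.testBit i ∧ a = 1 then (-1:ℝ) else 1)).comp (measurable_pi_apply i)

lemma walsh_abs (k : ℕ) (x : G) : |walsh k x| = 1 := by
  have : ∀ i ∈ Finset.range k, |(if k.testBit i ∧ x i = 1 then (-1 : ℝ) else 1)| = 1 := by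
    intro i _; split <;> simp
  rw [walsh, Finset.abs_prod, Finset.prod_congr rfl this, Finset.prod_const_one]

lemma walsh_sub (k : ℕ) (x y : G) : walsh k (x - y) = walsh k x * walsh k y := by
  rw [walsh, walsh, walsh, ← Finset.prod_mul_distrib]
  apply Finset.prod_congr rfl
  intro i _
  rcases zmod2_cases (x i) with h1 | h1 <;> rcases zmod2_cases (y i) with h2 | h2 <;>
    rcases Bool.eq_false_or_eq_true (k.testBit i) with h3 | h3 <;>
    simp [Pi.sub_apply, h1, h2, h3] <;> decide

noncomputable def W (n k : ℕ) (z : G) : ℝ :=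
  ∏ i ∈ Finset.range n, if k.testBit i ∧ z i = 1 then (-1 : ℝ) else 1

lemma walsh_eq_W {n k : ℕ} (hk : k < 2 ^ n) (z : G) : walsh k z = W n k z := by
  rcases le_total k n with h | h
  · exact Finset.prod_subset (Finset.range_subset_range.mpr h) (by
      intro i _ hi
      simp only [Finset.mem_range, not_lt] at hi
      have : k.testBit i = false := Nat.testBit_lt_two_pow (lt_of_le_of_lt hi (Nat.lt_two_pow_self (n := i)))
      simp [this])
  · exact (Finset.prod_subset (Finset.range_subset_range.mpr h) (by
      intro i _ hi
      simp only [Finset.mem_range, not_lt] at hi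
      have : k.testBit i = false := Nat.testBit_lt_two_pow
        (lt_of_lt_of_le hk (Nat.pow_le_pow_right (by norm_num) hi))
      simp [this])).symm

lemma sum_W (n : ℕ) (z : G) :
    ∑ k ∈ Finset.range (2 ^ n), W n k z = if z ∈ Gset n then (2:ℝ) ^ n else 0 := by
  induction n with
  | zero => simp [W, Gset]
  | succ n ih =>
    have h2 : (2:ℕ) ^ (n+1) = 2 ^ n + 2 ^ n := by ring
    rw [h2, Finset.sum_range_add]
    have e1 : ∀ k ∈ Finset.range (2 ^ n), W (n+1) k z = W n k z := by
      intro k hk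
      rw [W, Finset.prod_range_succ]
      have : k.testBit n = false := Nat.testBit_lt_two_pow (Finset.mem_range.mp hk)
      simp [this, W]
    have e2 : ∀ j ∈ Finset.range (2 ^ n),
        W (n+1) (2 ^ n + j) z = W n j z * (if z n = 1 then (-1:ℝ) else 1) := by
      intro j hj
      rw [W, Finset.prod_range_succ]
      have hbn : (2 ^ n + j).testBit n = true := by
        rw [Nat.testBit_two_pow_add_eq,
          Nat.testBit_lt_two_pow (Finset.mem_range.mp hj)]; rfl
      have hbi : ∀ i < n, (2 ^ n + j).testBit i = j.testBit i := fun i hi =>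
        Nat.testBit_two_pow_add_gt hi j
      have : ∀ i ∈ Finset.range n,
          (if (2 ^ n + j).testBit i ∧ z i = 1 then (-1:ℝ) else 1)
          = (if j.testBit i ∧ z i = 1 then (-1:ℝ) else 1) := by
        intro i hi; rw [hbi i (Finset.mem_range.mp hi)]
      rw [Finset.prod_congr rfl this, hbn]
      simp [W]
    rw [Finset.sum_congr rfl e1, Finset.sum_congr rfl (fun j hj => e2 j hj),
      ← Finset.sum_mul, ih]
    have hGiff : z ∈ Gset (n+1) ↔ z ∈ Gset n ∧ z n = 0 := by
      constructor
      · intro h; exact ⟨fun i hi => h i (by omega), h n (by omega)⟩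
      · rintro ⟨h1, h2⟩ i hi
        rcases Nat.lt_succ_iff_lt_or_eq.mp hi with h | h
        · exact h1 i h
        · rw [h]; exact h2
    rcases zmod2_cases (z n) with hz | hz
    · have hz1 : z n ≠ 1 := by rw [hz]; decide
      by_cases hG : z ∈ Gset n <;> simp [hz1, hGiff, hG, hz] <;> ring
    · have : z ∉ Gset (n+1) := by rw [hGiff]; rw [hz]; simp
      by_cases hG : z ∈ Gset n <;> simp [hGiff, hG, hz] <;> ring

lemma sum_walsh (n : ℕ) (z : G) :
    ∑ k ∈ Finset.range (2 ^ n), walsh k z = if z ∈ Gset n then (2:ℝ) ^ n else 0 := by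
  rw [Finset.sum_congr rfl (fun k hk => walsh_eq_W (Finset.mem_range.mp hk) z), sum_W]

lemma kernel_zero (s : ℝ) : kernel s (0 : G) = 0 := by
  rw [kernel, dif_neg]; push_neg; intro i; rfl

lemma kernel_nonneg (s : ℝ) (z : G) : 0 ≤ kernel s z := by
  rw [kernel]; split
  · positivity
  · exact le_refl 0

lemma kernel_ge {s : ℝ} (hs : 0 ≤ s) {n : ℕ} {z : G} (hz : z ∈ Gset n) (hz0 : z ≠ 0) :
    (2:ℝ) ^ (s * n) ≤ kernel s z := by
  have h : ∃ i, z i ≠ 0 := by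
    by_contra h; push_neg at h; exact hz0 (funext fun i => h i)
  rw [kernel, dif_pos h]
  have hn : n ≤ Nat.find h := by
    by_contra hc; push_neg at hc
    exact Nat.find_spec h (hz _ hc)
  apply Real.rpow_le_rpow_of_exponent_le (by norm_num)
  exact mul_le_mul_of_nonneg_left (by exact_mod_cast hn) hs

lemma ofReal_kernel_eq (s : ℝ) (z : G) :
    ENNReal.ofReal (kernel s z) =
      ∑' j : ℕ, (Gset j \ Gset (j+1)).indicator
        (fun _ => ENNReal.ofReal ((2:ℝ) ^ (s * (j:ℝ)))) z := by
  by_cases h : ∃ i, z i ≠ 0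
  · set j₀ := Nat.find h with hj₀
    have hmem : z ∈ Gset j₀ \ Gset (j₀+1) := by
      constructor
      · intro i hi
        by_contra hne
        exact absurd (Nat.find_min h hi) (by simp [hne])
      · intro hG
        exact Nat.find_spec h (hG j₀ (by omega))
    rw [kernel, dif_pos h, ← hj₀]
    rw [tsum_eq_single j₀]
    · rw [Set.indicator_of_mem hmem]
    · intro j hj
      apply Set.indicator_of_notMem
      rcases lt_or_gt_of_ne hj with hlt | hgt
      · -- j < j₀ : z ∈ Gset (j+1)
        intro hmem'
        refine hmem'.2 (fun i hi => ?_)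
        by_contra hne
        exact absurd (Nat.find_min h (by omega : i < Nat.find h)) (by simp [hne])
      · -- j₀ < j : z ∉ Gset j since z j₀ ≠ 0
        intro hmem'
        exact Nat.find_spec h (hmem'.1 j₀ hgt)
  · have hz : z = 0 := by
      push_neg at h; exact funext fun i => h i
    rw [kernel, dif_neg h, hz]
    rw [ENNReal.ofReal_zero, eq_comm]
    refine ENNReal.tsum_eq_zero.mpr (fun j => Set.indicator_of_notMem ?_ _)
    intro hmem'
    exact hmem'.2 (fun i _ => rfl)

lemma integrable_walsh (μ : Measure G) [IsFiniteMeasure μ] (k : ℕ) : Integrable (walsh k) μ :=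
  (integrable_const 1).mono' (measurable_walsh k).aestronglyMeasurable
    (Filter.Eventually.of_forall (fun x => le_of_eq (walsh_abs k x)))

/-- the real-valued local "Fourier inversion": indicator of the coset as Walsh sum -/
lemma indicator_kset (n : ℕ) (x y : G) :
    (Kset n x).indicator (fun _ => (1:ℝ)) y
      = ((2:ℝ) ^ n)⁻¹ * ∑ k ∈ Finset.range (2 ^ n), walsh k x * walsh k y := by
  have h := sum_walsh n (x - y)
  rw [Finset.sum_congr rfl (fun k _ => walsh_sub k x y)] at h
  rw [h]
  by_cases hy : y ∈ Kset n x
  · rw [Set.indicator_of_mem hy, if_pos (show x - y ∈ Gset n from hy)]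
    field_simp
  · rw [Set.indicator_of_notMem hy, if_neg (show ¬ x - y ∈ Gset n from hy), mul_zero]

lemma toReal_measure_kset (μ : Measure G) [IsFiniteMeasure μ] (n : ℕ) (x : G) :
    (μ (Kset n x)).toReal
      = ((2:ℝ) ^ n)⁻¹ * ∑ k ∈ Finset.range (2 ^ n), walsh k x * muHat μ k := by
  have h1 : ∫ y, (Kset n x).indicator (fun _ => (1:ℝ)) y ∂μ = (μ (Kset n x)).toReal := by
    rw [integral_indicator_const (1:ℝ) (measurableSet_Kset n x), smul_eq_mul, mul_one]
    rfl
  rw [← h1, integral_congr_ae (Filter.Eventually.of_forall (indicator_kset n x)),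
    integral_const_mul]
  congr 1
  rw [integral_finset_sum _ (fun k _ => (integrable_walsh μ k).const_mul (walsh k x))]
  exact Finset.sum_congr rfl (fun k _ => integral_const_mul _ _)

lemma measure_kset (μ : Measure G) [IsFiniteMeasure μ] (n : ℕ) (x : G) :
    μ (Kset n x) = ENNReal.ofReal
      (((2:ℝ) ^ n)⁻¹ * ∑ k ∈ Finset.range (2 ^ n), walsh k x * muHat μ k) := by
  rw [← toReal_measure_kset, ENNReal.ofReal_toReal (measure_ne_top μ _)]

lemma measurable_musKset (μ : Measure G) [IsFiniteMeasure μ] (n : ℕ) :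
    Measurable (fun x => μ (Kset n x)) := by
  have : (fun x => μ (Kset n x)) = fun x => ENNReal.ofReal
      (((2:ℝ) ^ n)⁻¹ * ∑ k ∈ Finset.range (2 ^ n), walsh k x * muHat μ k) := by
    funext x; exact measure_kset μ n x
  rw [this]
  apply ENNReal.measurable_ofReal.comp
  exact (Finset.measurable_sum _ (fun k _ => (measurable_walsh k).mul_const _)).const_mul _

lemma lintegral_measure_kset (μ : Measure G) [IsFiniteMeasure μ] (n : ℕ) :
    ∫⁻ x, μ (Kset n x) ∂μ = ENNReal.ofReal
      (((2:ℝ) ^ n)⁻¹ * ∑ k ∈ Finset.range (2 ^ n), (muHat μ k) ^ 2) := by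
  calc ∫⁻ x, μ (Kset n x) ∂μ
      = ∫⁻ x, ENNReal.ofReal
        (((2:ℝ) ^ n)⁻¹ * ∑ k ∈ Finset.range (2 ^ n), walsh k x * muHat μ k) ∂μ :=
        lintegral_congr (measure_kset μ n)
    _ = ENNReal.ofReal (∫ x, ((2:ℝ) ^ n)⁻¹
          * ∑ k ∈ Finset.range (2 ^ n), walsh k x * muHat μ k ∂μ) := by
        rw [ofReal_integral_eq_lintegral_ofReal]
        · apply Integrable.const_mul
          exact integrable_finset_sum _ (fun k _ => (integrable_walsh μ k).mul_const _)
        · refine Filter.Eventually.of_forall (fun x => ?_)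
          have h0 : (0:ℝ) ≤ (μ (Kset n x)).toReal := ENNReal.toReal_nonneg
          rw [toReal_measure_kset μ n x] at h0
          exact h0
    _ = ENNReal.ofReal
        (((2:ℝ) ^ n)⁻¹ * ∑ k ∈ Finset.range (2 ^ n), (muHat μ k) ^ 2) := by
        congr 1
        rw [integral_const_mul]
        congr 1
        rw [integral_finset_sum _ (fun k _ => (integrable_walsh μ k).mul_const _)]
        refine Finset.sum_congr rfl (fun k _ => ?_)
        rw [integral_mul_const, sq]
        rfl

lemma energy_le (s : ℝ) (μ : Measure G) [IsFiniteMeasure μ] :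
    energy s μ ≤ ∑' j : ℕ, ENNReal.ofReal ((2:ℝ) ^ (s * (j:ℝ)))
      * ∫⁻ x, μ (Kset j x) ∂μ := by
  have hin : ∀ x : G, ∫⁻ y, ENNReal.ofReal (kernel s (x - y)) ∂μ
      ≤ ∑' j : ℕ, ENNReal.ofReal ((2:ℝ) ^ (s * (j:ℝ))) * μ (Kset j x) := by
    intro x
    have heq : ∀ y : G, ENNReal.ofReal (kernel s (x - y))
        = ∑' j : ℕ, (Kset j x \ Kset (j+1) x).indicator
          (fun _ => ENNReal.ofReal ((2:ℝ) ^ (s * (j:ℝ)))) y := by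
      intro y
      rw [ofReal_kernel_eq]
      refine tsum_congr (fun j => ?_)
      by_cases hy : y ∈ Kset j x \ Kset (j+1) x
      · have h1 : y ∈ Kset j x := hy.1
        have h2 : y ∉ Kset (j+1) x := hy.2
        rw [Set.indicator_of_mem hy, Set.indicator_of_mem
          (show x - y ∈ Gset j \ Gset (j+1) from ⟨h1, h2⟩)]
      · rw [Set.indicator_of_notMem hy, Set.indicator_of_notMem
          (show x - y ∉ Gset j \ Gset (j+1) from fun hmem =>
            hy (show y ∈ Kset j x \ Kset (j+1) x from ⟨hmem.1, hmem.2⟩))]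
    rw [lintegral_congr heq, lintegral_tsum (fun j =>
      (measurable_const.indicator ((measurableSet_Kset j x).diff
        (measurableSet_Kset (j+1) x))).aemeasurable)]
    refine ENNReal.tsum_le_tsum (fun j => ?_)
    rw [lintegral_indicator_const ((measurableSet_Kset j x).diff (measurableSet_Kset (j+1) x))]
    exact mul_le_mul_right (measure_mono Set.diff_subset) _
  calc energy s μ ≤ ∫⁻ x, ∑' j : ℕ, ENNReal.ofReal ((2:ℝ) ^ (s * (j:ℝ)))
        * μ (Kset j x) ∂μ := lintegral_mono hin
    _ = ∑' j : ℕ, ∫⁻ x, ENNReal.ofReal ((2:ℝ) ^ (s * (j:ℝ))) * μ (Kset j x) ∂μ :=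
        lintegral_tsum (fun j => ((measurable_musKset μ j).const_mul _).aemeasurable)
    _ = ∑' j : ℕ, ENNReal.ofReal ((2:ℝ) ^ (s * (j:ℝ))) * ∫⁻ x, μ (Kset j x) ∂μ := by
        refine tsum_congr (fun j => ?_)
        rw [lintegral_const_mul _ (measurable_musKset μ j)]

lemma rpow_pow_eq (s : ℝ) (j : ℕ) :
    (2:ℝ) ^ (s * (j:ℝ)) * ((2:ℝ) ^ j)⁻¹ = ((2:ℝ) ^ (s-1)) ^ j := by
  rw [← Real.rpow_natCast ((2:ℝ) ^ (s-1)) j, ← Real.rpow_natCast (2:ℝ) j,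
    ← Real.rpow_mul (by norm_num : (0:ℝ) ≤ 2), ← Real.rpow_neg (by norm_num : (0:ℝ) ≤ 2),
    ← Real.rpow_add (by norm_num : (0:ℝ) < 2)]
  ring_nf

lemma pow_base_eq (s : ℝ) (m : ℕ) : ((2:ℝ) ^ (s-1)) ^ m = (((2:ℝ) ^ m : ℝ)) ^ (s-1) := by
  rw [← Real.rpow_natCast ((2:ℝ) ^ (s-1)) m, ← Real.rpow_natCast (2:ℝ) m,
    ← Real.rpow_mul (by norm_num : (0:ℝ) ≤ 2), ← Real.rpow_mul (by norm_num : (0:ℝ) ≤ 2),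
    mul_comm]

lemma energy_lt_top {s : ℝ} (hs : 0 < s) (hs1 : s < 1) (μ : Measure G) [IsFiniteMeasure μ]
    (hsum : Summable (fun k : ℕ => (k:ℝ) ^ (s - 1) * (muHat μ k) ^ 2)) :
    energy s μ < ⊤ := by
  have ha0 : ∀ k : ℕ, 0 ≤ (muHat μ k) ^ 2 := fun k => sq_nonneg _
  have hρ0 : (0:ℝ) < (2:ℝ) ^ (s-1) := Real.rpow_pos_of_pos (by norm_num) _
  have hρ1 : (2:ℝ) ^ (s-1) < 1 :=
    Real.rpow_lt_one_of_one_lt_of_neg (by norm_num) (by linarith)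
  have hrE1 : ENNReal.ofReal ((2:ℝ) ^ (s-1)) < 1 := by
    rw [← ENNReal.ofReal_one]
    exact (ENNReal.ofReal_lt_ofReal_iff_of_nonneg (le_of_lt hρ0)).mpr hρ1
  have hCne : (1 - ENNReal.ofReal ((2:ℝ) ^ (s-1)))⁻¹ ≠ ⊤ := by
    rw [ENNReal.inv_ne_top]
    exact ne_of_gt (tsub_pos_iff_lt.mpr hrE1)
  -- step 1+2 : energy ≤ ∑_j ∑_k f j k
  have step12 : energy s μ ≤ ∑' (j : ℕ) (k : ℕ),
      (if k < 2 ^ j then (ENNReal.ofReal ((2:ℝ) ^ (s-1))) ^ j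
        * ENNReal.ofReal ((muHat μ k) ^ 2) else 0) := by
    refine le_trans (energy_le s μ) (le_of_eq (tsum_congr (fun j => ?_)))
    rw [lintegral_measure_kset μ j]
    rw [← ENNReal.ofReal_mul (by positivity), ← mul_assoc, rpow_pow_eq,
      Finset.mul_sum]
    rw [ENNReal.ofReal_sum_of_nonneg (fun k _ => by positivity)]
    rw [tsum_eq_sum (s := Finset.range (2 ^ j))
      (fun k hk => if_neg (fun hlt => hk (Finset.mem_range.mpr hlt)))]
    refine Finset.sum_congr rfl (fun k hk => ?_)
    rw [if_pos (Finset.mem_range.mp hk), ENNReal.ofReal_mul (by positivity),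
      ENNReal.ofReal_pow (le_of_lt hρ0)]
  -- geometric tail
  have hD : ∀ m : ℕ, (∑' j : ℕ, if m ≤ j then (ENNReal.ofReal ((2:ℝ) ^ (s-1))) ^ j else 0)
      = (ENNReal.ofReal ((2:ℝ) ^ (s-1))) ^ m * (1 - ENNReal.ofReal ((2:ℝ) ^ (s-1)))⁻¹ := by
    intro m
    have hinj : Function.Injective (fun i : ℕ => m + i) := fun i j h => by
      have : m + i = m + j := h
      omega
    have hsupp : Function.support
        (fun j : ℕ => if m ≤ j then (ENNReal.ofReal ((2:ℝ) ^ (s-1))) ^ j else 0)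
        ⊆ Set.range (fun i : ℕ => m + i) := by
      intro j hj
      by_cases h : m ≤ j
      · exact ⟨j - m, show m + (j - m) = j by omega⟩
      · exact absurd (if_neg h) hj
    rw [← hinj.tsum_eq hsupp]
    simp only [le_add_iff_nonneg_right, zero_le, if_true, pow_add]
    rw [ENNReal.tsum_mul_left, ENNReal.tsum_geometric]
  -- inner bound
  have step4 : ∀ k : ℕ, (∑' j : ℕ,
      (if k < 2 ^ j then (ENNReal.ofReal ((2:ℝ) ^ (s-1))) ^ j
        * ENNReal.ofReal ((muHat μ k) ^ 2) else 0))
      ≤ (1 - ENNReal.ofReal ((2:ℝ) ^ (s-1)))⁻¹ *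
        (if k = 0 then ENNReal.ofReal ((muHat μ 0) ^ 2)
          else ENNReal.ofReal ((k:ℝ) ^ (s-1) * (muHat μ k) ^ 2)) := by
    intro k
    have hsplit : (∑' j : ℕ,
        (if k < 2 ^ j then (ENNReal.ofReal ((2:ℝ) ^ (s-1))) ^ j
          * ENNReal.ofReal ((muHat μ k) ^ 2) else 0))
        = (∑' j : ℕ, if k < 2 ^ j then (ENNReal.ofReal ((2:ℝ) ^ (s-1))) ^ j else 0)
          * ENNReal.ofReal ((muHat μ k) ^ 2) := by
      rw [← ENNReal.tsum_mul_right]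
      refine tsum_congr (fun j => ?_)
      by_cases h : k < 2 ^ j
      · rw [if_pos h, if_pos h]
      · rw [if_neg h, if_neg h, zero_mul]
    by_cases hk0 : k = 0
    · subst hk0
      have hmono : ∀ j : ℕ, (if 0 < 2 ^ j then (ENNReal.ofReal ((2:ℝ) ^ (s-1))) ^ j else 0)
          ≤ ((ENNReal.ofReal ((2:ℝ) ^ (s-1))) ^ j) := by
        intro j; split <;> simp
      rw [hsplit, if_pos rfl]
      refine mul_le_mul_left ?_ _
      refine le_trans (ENNReal.tsum_le_tsum hmono) ?_
      rw [ENNReal.tsum_geometric]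
    · set m : ℕ := Nat.log 2 k + 1 with hm
      have hmono : ∀ j : ℕ, (if k < 2 ^ j then (ENNReal.ofReal ((2:ℝ) ^ (s-1))) ^ j else 0)
          ≤ (if m ≤ j then (ENNReal.ofReal ((2:ℝ) ^ (s-1))) ^ j else 0) := by
        intro j
        by_cases h : k < 2 ^ j
        · rw [if_pos h, if_pos]
          by_contra hc
          push_neg at hc
          have hj : j ≤ Nat.log 2 k := by omega
          have : 2 ^ j ≤ k :=
            le_trans (Nat.pow_le_pow_right (by norm_num) hj) (Nat.pow_log_le_self 2 hk0)
          omega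
        · rw [if_neg h]
          exact zero_le
      have hkm : (k:ℝ) ≤ (2:ℝ) ^ m := by
        exact_mod_cast le_of_lt (Nat.lt_pow_succ_log_self (by norm_num) k)
      have hrm : (ENNReal.ofReal ((2:ℝ) ^ (s-1))) ^ m
          ≤ ENNReal.ofReal ((k:ℝ) ^ (s-1)) := by
        rw [← ENNReal.ofReal_pow (le_of_lt hρ0)]
        apply ENNReal.ofReal_le_ofReal
        rw [pow_base_eq]
        exact Real.rpow_le_rpow_of_nonpos
          (by exact_mod_cast Nat.pos_of_ne_zero hk0) hkm (by linarith)
      rw [hsplit, if_neg hk0, ENNReal.ofReal_mul (by positivity)]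
      calc (∑' j : ℕ, if k < 2 ^ j then (ENNReal.ofReal ((2:ℝ) ^ (s-1))) ^ j else 0)
            * ENNReal.ofReal ((muHat μ k) ^ 2)
          ≤ ((ENNReal.ofReal ((2:ℝ) ^ (s-1))) ^ m
              * (1 - ENNReal.ofReal ((2:ℝ) ^ (s-1)))⁻¹)
            * ENNReal.ofReal ((muHat μ k) ^ 2) := by
            refine mul_le_mul_left ?_ _
            rw [← hD m]
            exact ENNReal.tsum_le_tsum hmono
        _ ≤ (ENNReal.ofReal ((k:ℝ) ^ (s-1))
              * (1 - ENNReal.ofReal ((2:ℝ) ^ (s-1)))⁻¹)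
            * ENNReal.ofReal ((muHat μ k) ^ 2) :=
            mul_le_mul_left (mul_le_mul_left hrm _) _
        _ = (1 - ENNReal.ofReal ((2:ℝ) ^ (s-1)))⁻¹ *
            (ENNReal.ofReal ((k:ℝ) ^ (s-1)) * ENNReal.ofReal ((muHat μ k) ^ 2)) := by
            ring
  -- assemble
  have hFsum : (∑' k : ℕ, ENNReal.ofReal ((k:ℝ) ^ (s-1) * (muHat μ k) ^ 2))
      = ENNReal.ofReal (∑' k : ℕ, (k:ℝ) ^ (s-1) * (muHat μ k) ^ 2) :=
    (ENNReal.ofReal_tsum_of_nonneg (fun k => by positivity) hsum).symm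
  have hgbsum : (∑' k : ℕ, (if k = 0 then ENNReal.ofReal ((muHat μ 0) ^ 2)
        else ENNReal.ofReal ((k:ℝ) ^ (s-1) * (muHat μ k) ^ 2)))
      ≤ ENNReal.ofReal ((muHat μ 0) ^ 2)
        + ∑' k : ℕ, ENNReal.ofReal ((k:ℝ) ^ (s-1) * (muHat μ k) ^ 2) := by
    refine ENNReal.tsum_le_tsum (f := fun k : ℕ => if k = 0 then ENNReal.ofReal ((muHat μ 0) ^ 2)
        else ENNReal.ofReal ((k:ℝ) ^ (s-1) * (muHat μ k) ^ 2))
      (g := fun k : ℕ => (if k = 0 then ENNReal.ofReal ((muHat μ 0) ^ 2) else 0)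
        + ENNReal.ofReal ((k:ℝ) ^ (s-1) * (muHat μ k) ^ 2)) (fun k => ?_)
      |>.trans (le_of_eq ?_)
    · by_cases hk : k = 0
      · subst hk
        simp only [if_pos rfl]
        exact le_add_of_nonneg_right (zero_le)
      · simp only [if_neg hk, zero_add, le_refl]
    · rw [ENNReal.tsum_add]
      congr 1
      simp
  calc energy s μ
      ≤ ∑' (j : ℕ) (k : ℕ),
        (if k < 2 ^ j then (ENNReal.ofReal ((2:ℝ) ^ (s-1))) ^ j
          * ENNReal.ofReal ((muHat μ k) ^ 2) else 0) := step12
    _ = ∑' (k : ℕ) (j : ℕ),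
        (if k < 2 ^ j then (ENNReal.ofReal ((2:ℝ) ^ (s-1))) ^ j
          * ENNReal.ofReal ((muHat μ k) ^ 2) else 0) := ENNReal.tsum_comm
    _ ≤ ∑' (k : ℕ), (1 - ENNReal.ofReal ((2:ℝ) ^ (s-1)))⁻¹ *
        (if k = 0 then ENNReal.ofReal ((muHat μ 0) ^ 2)
          else ENNReal.ofReal ((k:ℝ) ^ (s-1) * (muHat μ k) ^ 2)) :=
        ENNReal.tsum_le_tsum step4
    _ = (1 - ENNReal.ofReal ((2:ℝ) ^ (s-1)))⁻¹ *
        ∑' (k : ℕ), (if k = 0 then ENNReal.ofReal ((muHat μ 0) ^ 2)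
          else ENNReal.ofReal ((k:ℝ) ^ (s-1) * (muHat μ k) ^ 2)) := ENNReal.tsum_mul_left
    _ ≤ (1 - ENNReal.ofReal ((2:ℝ) ^ (s-1)))⁻¹ *
        (ENNReal.ofReal ((muHat μ 0) ^ 2)
          + ∑' k : ℕ, ENNReal.ofReal ((k:ℝ) ^ (s-1) * (muHat μ k) ^ 2)) :=
        mul_le_mul_right hgbsum _
    _ < ⊤ := by
        rw [hFsum]
        exact ENNReal.mul_lt_top hCne.lt_top
          (ENNReal.add_lt_top.mpr ⟨ENNReal.ofReal_lt_top, ENNReal.ofReal_lt_top⟩)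

lemma two_rpow_neg (i : ℕ) : (2:ℝ) ^ (-(i:ℝ) - 1) = ((2:ℝ)⁻¹) ^ (i+1) := by
  rw [inv_pow, ← Real.rpow_natCast (2:ℝ) (i+1), ← Real.rpow_neg (by norm_num : (0:ℝ) ≤ 2)]
  push_cast
  ring_nf

lemma rho_term_nonneg (x y : G) (i : ℕ) :
    0 ≤ (2:ℝ) ^ (-(i:ℝ) - 1) * (if x i = y i then 0 else 1) := by
  have : (0:ℝ) < (2:ℝ) ^ (-(i:ℝ) - 1) := Real.rpow_pos_of_pos (by norm_num) _
  split <;> nlinarith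

lemma rho_summable (x y : G) :
    Summable (fun i : ℕ => (2:ℝ) ^ (-(i:ℝ) - 1) * (if x i = y i then 0 else 1)) := by
  have hg : Summable (fun i : ℕ => ((2:ℝ)⁻¹) ^ i) :=
    summable_geometric_of_lt_one (by norm_num) (by norm_num)
  refine Summable.of_nonneg_of_le (rho_term_nonneg x y) (fun i => ?_) hg
  rw [two_rpow_neg]
  have h1 : ((2:ℝ)⁻¹) ^ (i+1) ≤ ((2:ℝ)⁻¹) ^ i :=
    pow_le_pow_of_le_one (by norm_num) (by norm_num) (by omega)
  have h2 : (0:ℝ) < ((2:ℝ)⁻¹) ^ (i+1) := by positivity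
  split
  · nlinarith
  · nlinarith

lemma rho_lower {x y : G} {j : ℕ} (h : x j ≠ y j) : (2:ℝ) ^ (-(j:ℝ) - 1) ≤ rho x y := by
  have := Summable.le_tsum (rho_summable x y) j (fun i _ => rho_term_nonneg x y i)
  rwa [if_neg h, mul_one] at this

lemma rho_eq_zero {x y : G} (h : rho x y = 0) : x = y := by
  by_contra hne
  have : ∃ j, x j ≠ y j := by
    by_contra hc; push_neg at hc; exact hne (funext hc)
  obtain ⟨j, hj⟩ := this
  have h1 := rho_lower hj
  have h2 : (0:ℝ) < (2:ℝ) ^ (-(j:ℝ) - 1) := Real.rpow_pos_of_pos (by norm_num) _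
  rw [h] at h1; linarith

lemma le_diamRho {I : Set G} {x y : G} (hx : x ∈ I) (hy : y ∈ I) :
    ENNReal.ofReal (rho x y) ≤ diamRho I :=
  le_iSup₂_of_le x hx (le_iSup₂_of_le y hy le_rfl)

lemma agree_of_rho_lt {x y : G} {n : ℕ} (h : rho x y < ((2:ℝ)⁻¹) ^ n) :
    ∀ i < n, x i = y i := by
  intro i hi
  by_contra hne
  have h1 := rho_lower hne
  have h2 : ((2:ℝ)⁻¹) ^ n ≤ (2:ℝ) ^ (-(i:ℝ) - 1) := by
    rw [two_rpow_neg]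
    exact pow_le_pow_of_le_one (by norm_num) (by norm_num) (by omega)
  linarith

lemma subset_kset {I : Set G} {x₀ : G} (hx₀ : x₀ ∈ I) {n : ℕ}
    (h : diamRho I < ENNReal.ofReal (((2:ℝ)⁻¹) ^ n)) : I ⊆ Kset n x₀ := by
  intro y hy
  have h1 : ENNReal.ofReal (rho x₀ y) < ENNReal.ofReal (((2:ℝ)⁻¹) ^ n) :=
    lt_of_le_of_lt (le_diamRho hx₀ hy) h
  have h2 : rho x₀ y < ((2:ℝ)⁻¹) ^ n := by
    by_contra hc
    push_neg at hc
    exact absurd (ENNReal.ofReal_le_ofReal hc) (not_le.mpr h1)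
  intro i hi
  show (x₀ - y) i = 0
  have := agree_of_rho_lt h2 i hi
  simp [Pi.sub_apply, this]

lemma measurable_ofReal_kernel (s : ℝ) :
    Measurable (fun z : G => ENNReal.ofReal (kernel s z)) := by
  have h : (fun z : G => ENNReal.ofReal (kernel s z)) = fun z => ∑' j : ℕ,
      (Gset j \ Gset (j+1)).indicator (fun _ => ENNReal.ofReal ((2:ℝ) ^ (s * (j:ℝ)))) z :=
    funext (ofReal_kernel_eq s)
  rw [h]
  exact Measurable.ennreal_tsum (fun j => measurable_const.indicator
    ((measurableSet_Gset j).diff (measurableSet_Gset (j+1))))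

lemma measurable_potential (s : ℝ) (μ : Measure G) [IsFiniteMeasure μ] :
    Measurable (potential s μ) :=
  ((measurable_ofReal_kernel s).comp (measurable_fst.sub measurable_snd)).lintegral_prod_right'

lemma exists_frostman {s : ℝ} (hs : 0 < s) (hs1 : s < 1) (μ : Measure G) [IsFiniteMeasure μ]
    (hμ0 : μ ≠ 0) (hna : ∀ x : G, μ {x} = 0)
    (hsum : Summable (fun k : ℕ => (k:ℝ) ^ (s - 1) * (muHat μ k) ^ 2)) :
    ∃ F : Set G, MeasurableSet F ∧ 0 < μ F ∧ ∃ M : ℝ≥0∞, M ≠ ⊤ ∧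
      ∀ (n : ℕ) (x : G),
        ENNReal.ofReal ((2:ℝ) ^ (s * (n:ℝ))) * μ.restrict F (Kset n x) ≤ M := by
  have henergy : energy s μ < ⊤ := energy_lt_top hs hs1 μ hsum
  have hP : Measurable (potential s μ) := measurable_potential s μ
  have hlint : ∫⁻ x, potential s μ x ∂μ = energy s μ := rfl
  have hae : ∀ᵐ x ∂μ, potential s μ x < ⊤ := ae_lt_top hP (by rw [hlint]; exact henergy.ne)
  have hcov : {x : G | potential s μ x < ⊤} ⊆ ⋃ m : ℕ, {x | potential s μ x ≤ (m:ℝ≥0∞)} := by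
    intro x hx
    obtain ⟨n, hn⟩ := ENNReal.exists_nat_gt hx.ne
    exact Set.mem_iUnion.mpr ⟨n, le_of_lt hn⟩
  have hexm : ∃ m : ℕ, μ {x | potential s μ x ≤ (m:ℝ≥0∞)} ≠ 0 := by
    by_contra hc
    push_neg at hc
    have h1 : μ (⋃ m : ℕ, {x | potential s μ x ≤ (m:ℝ≥0∞)}) = 0 := measure_iUnion_null hc
    have h2 : μ {x : G | potential s μ x < ⊤} = 0 :=
      measure_mono_null hcov h1
    have h3 : μ Set.univ ≤ μ {x : G | potential s μ x < ⊤}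
        + μ {x : G | potential s μ x < ⊤}ᶜ := by
      refine (measure_mono ?_).trans (measure_union_le _ _)
      intro x _
      by_cases hx : potential s μ x < ⊤
      · exact Or.inl hx
      · exact Or.inr hx
    have h4 : μ {x : G | potential s μ x < ⊤}ᶜ = 0 := hae
    rw [h2, h4, add_zero] at h3
    have h5 : μ Set.univ = 0 := le_antisymm h3 (zero_le)
    exact hμ0 (Measure.measure_univ_eq_zero.mp h5)
  obtain ⟨m, hm⟩ := hexm
  refine ⟨{x | potential s μ x ≤ (m:ℝ≥0∞)}, measurableSet_le hP measurable_const,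
    pos_iff_ne_zero.mpr hm, (m:ℝ≥0∞), ENNReal.natCast_ne_top m, ?_⟩
  intro n x
  set F : Set G := {x | potential s μ x ≤ (m:ℝ≥0∞)} with hF
  by_cases hFK : (Kset n x ∩ F).Nonempty
  · obtain ⟨w, hwK, hwF⟩ := hFK
    have hwP : potential s μ w ≤ (m:ℝ≥0∞) := hwF
    have h1 : μ.restrict F (Kset n x) ≤ μ (Kset n x) := by
      rw [Measure.restrict_apply' (measurableSet_le hP measurable_const)]
      exact measure_mono Set.inter_subset_left
    have h2 : μ (Kset n x) = μ (Kset n x \ {w}) := (measure_diff_null (hna w)).symm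
    have h4 : ∫⁻ _ in Kset n x \ {w}, ENNReal.ofReal ((2:ℝ) ^ (s * (n:ℝ))) ∂μ
        ≤ ∫⁻ y in Kset n x \ {w}, ENNReal.ofReal (kernel s (w - y)) ∂μ := by
      refine setLIntegral_mono
        ((measurable_ofReal_kernel s).comp (measurable_const.sub measurable_id)) ?_
      intro y hy
      refine ENNReal.ofReal_le_ofReal (kernel_ge (le_of_lt hs) ?_ ?_)
      · intro i hi
        have hxw : (x - w) i = 0 := hwK i hi
        have hxy : (x - y) i = 0 := hy.1 i hi
        have : w i - y i = (x i - y i) - (x i - w i) := by ring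
        rw [Pi.sub_apply, this, ← Pi.sub_apply x y, ← Pi.sub_apply x w, hxw, hxy, sub_zero]
      · have hwy : w ≠ y := fun h => hy.2 (by rw [h]; rfl)
        exact sub_ne_zero.mpr hwy
    have h5 : ∫⁻ y in Kset n x \ {w}, ENNReal.ofReal (kernel s (w - y)) ∂μ
        ≤ potential s μ w := lintegral_mono' Measure.restrict_le_self (le_refl _)
    calc ENNReal.ofReal ((2:ℝ) ^ (s * (n:ℝ))) * μ.restrict F (Kset n x)
        ≤ ENNReal.ofReal ((2:ℝ) ^ (s * (n:ℝ))) * μ (Kset n x \ {w}) := by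
          rw [← h2]; exact mul_le_mul_right h1 _
      _ = ∫⁻ _ in Kset n x \ {w}, ENNReal.ofReal ((2:ℝ) ^ (s * (n:ℝ))) ∂μ := by
          rw [setLIntegral_const]
      _ ≤ (m:ℝ≥0∞) := le_trans h4 (le_trans h5 hwP)
  · have : μ.restrict F (Kset n x) = 0 := by
      rw [Measure.restrict_apply' (measurableSet_le hP measurable_const)]
      rw [Set.not_nonempty_iff_eq_empty.mp hFK]
      exact measure_empty
    rw [this, mul_zero]
    exact zero_le

lemma inv_rpow_helper (s : ℝ) (n : ℕ) :
    (((2:ℝ) ^ (s * (n:ℝ)))⁻¹ : ℝ) = (((2:ℝ)⁻¹) ^ (n+1)) ^ s * (2:ℝ) ^ s := by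
  rw [← two_rpow_neg n, ← Real.rpow_neg (by norm_num : (0:ℝ) ≤ 2),
    ← Real.rpow_mul (by norm_num : (0:ℝ) ≤ 2), ← Real.rpow_add (by norm_num : (0:ℝ) < 2)]
  congr 1
  ring

lemma rpow_pow_comm (x : ℝ) (hx : 0 ≤ x) (c : ℝ) (m : ℕ) : ((x ^ m : ℝ)) ^ c = (x ^ c) ^ m := by
  rw [← Real.rpow_natCast x m, ← Real.rpow_natCast (x ^ c) m, ← Real.rpow_mul hx,
    ← Real.rpow_mul hx, mul_comm]

lemma Hmeas_eq_top {s : ℝ} (hs : 0 < s) (hs1 : s < 1) (E : Set G)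
    (μ : Measure G) [IsFiniteMeasure μ] (hμ0 : μ ≠ 0) (hna : ∀ x : G, μ {x} = 0)
    (hsupp : μ Eᶜ = 0)
    (hsum : Summable (fun k : ℕ => (k:ℝ) ^ (s - 1) * (muHat μ k) ^ 2))
    {t : ℝ} (ht0 : 0 < t) (hts : t < s) : Hmeas t E = ⊤ := by
  obtain ⟨F, hFmeas, hFpos, M, hMne, hM⟩ := exists_frostman hs hs1 μ hμ0 hna hsum
  set ν : Measure G := μ.restrict F with hν
  -- ν E > 0
  have hνE : 0 < ν E := by
    have h1 : μ F ≤ μ (F ∩ E) + μ (F ∩ Eᶜ) := by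
      refine (measure_mono ?_).trans (measure_union_le _ _)
      intro x hx
      by_cases hxE : x ∈ E
      · exact Or.inl ⟨hx, hxE⟩
      · exact Or.inr ⟨hx, hxE⟩
    have h2 : μ (F ∩ Eᶜ) = 0 := measure_mono_null Set.inter_subset_right hsupp
    rw [h2, add_zero] at h1
    have h3 : ν E = μ (E ∩ F) := Measure.restrict_apply' hFmeas
    rw [h3, Set.inter_comm]
    exact lt_of_lt_of_le hFpos h1
  -- constants
  set M1 : ℝ≥0∞ := M + 1 with hM1
  have hM1ne : M1 ≠ ⊤ := by
    rw [hM1]; exact ENNReal.add_ne_top.mpr ⟨hMne, ENNReal.one_ne_top⟩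
  have hM1pos : M1 ≠ 0 := by
    rw [hM1]
    exact (lt_of_lt_of_le zero_lt_one le_add_self).ne'
  have hM1b : ∀ (n : ℕ) (x : G),
      ENNReal.ofReal ((2:ℝ) ^ (s * (n:ℝ))) * ν (Kset n x) ≤ M1 :=
    fun n x => le_trans (hM n x) le_self_add
  set Cst : ℝ≥0∞ := M1 * ENNReal.ofReal ((2:ℝ) ^ s) with hCst
  have hCstne : Cst ≠ ⊤ := by
    rw [hCst]
    exact ENNReal.mul_ne_top hM1ne ENNReal.ofReal_ne_top
  have hCst0 : Cst ≠ 0 := by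
    rw [hCst]
    refine mul_ne_zero hM1pos ?_
    have : (0:ℝ) < (2:ℝ) ^ s := Real.rpow_pos_of_pos (by norm_num) s
    positivity
  set q : ℝ≥0∞ := ENNReal.ofReal (((2:ℝ)⁻¹) ^ (s - t)) with hq
  have hqr0 : (0:ℝ) < ((2:ℝ)⁻¹) ^ (s - t) := Real.rpow_pos_of_pos (by norm_num) _
  have hq1 : q < 1 := by
    rw [hq, ← ENNReal.ofReal_one]
    exact (ENNReal.ofReal_lt_ofReal_iff (by norm_num)).mpr
      (Real.rpow_lt_one (by norm_num) (by norm_num) (by linarith))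
  set δ : ℕ → ℝ≥0∞ := fun m => ENNReal.ofReal (((2:ℝ)⁻¹) ^ m) with hδ
  have hδpos : ∀ m, 0 < δ m := fun m => ENNReal.ofReal_pos.mpr (by positivity)
  have hδtop : ∀ m, δ m ≠ ⊤ := fun m => ENNReal.ofReal_ne_top
  have hδpow : ∀ m : ℕ, (δ m) ^ (s - t) = q ^ m := by
    intro m
    rw [hδ, hq, ENNReal.ofReal_rpow_of_pos (by positivity), rpow_pow_comm _ (by norm_num),
      ENNReal.ofReal_pow (le_of_lt hqr0)]
  -- the per-cover bound
  have hper : ∀ (m : ℕ) (I : ℕ → Set G), E ⊆ (⋃ i, I i) → (∀ i, diamRho (I i) < δ m) →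
      ν E ≤ (Cst * q ^ m) * ∑' i, diamRho (I i) ^ t := by
    intro m I hcov hsmall
    have hbound : ∀ i, ν (I i) ≤ (Cst * q ^ m) * diamRho (I i) ^ t := by
      intro i
      by_cases hν0 : ν (I i) = 0
      · rw [hν0]; exact zero_le
      have hne : (I i).Nonempty := by
        rw [Set.nonempty_iff_ne_empty]
        intro h
        exact hν0 (by rw [h]; exact measure_empty)
      have hκ0 : diamRho (I i) ≠ 0 := by
        intro h0
        have hsub : (I i).Subsingleton := by
          intro x hx y hy
          have h1 : ENNReal.ofReal (rho x y) ≤ 0 := h0 ▸ le_diamRho hx hy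
          have h2 : rho x y ≤ 0 := by
            by_contra hc
            push_neg at hc
            exact absurd (le_antisymm h1 (zero_le)) (by positivity)
          have h3 : 0 ≤ rho x y := tsum_nonneg (rho_term_nonneg x y)
          exact rho_eq_zero (le_antisymm h2 h3)
        rcases hsub.eq_empty_or_singleton with h | ⟨x, h⟩
        · exact hν0 (by rw [h]; exact measure_empty)
        · refine hν0 ?_
          rw [h, hν, Measure.restrict_apply' hFmeas]
          exact measure_mono_null Set.inter_subset_left (hna x)
      have hκtop : diamRho (I i) ≠ ⊤ := (lt_of_lt_of_le (hsmall i) le_top).ne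
      have hκt : 0 < (diamRho (I i)).toReal := ENNReal.toReal_pos hκ0 hκtop
      obtain ⟨n', hn'⟩ := exists_pow_lt_of_lt_one hκt (by norm_num : (2:ℝ)⁻¹ < 1)
      have hex : ∃ j : ℕ, ¬ (diamRho (I i) < ENNReal.ofReal (((2:ℝ)⁻¹) ^ j)) := by
        refine ⟨n', not_lt.mpr ?_⟩
        calc ENNReal.ofReal (((2:ℝ)⁻¹) ^ n') ≤ ENNReal.ofReal ((diamRho (I i)).toReal) :=
              ENNReal.ofReal_le_ofReal (le_of_lt hn')
          _ = diamRho (I i) := ENNReal.ofReal_toReal hκtop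
      have hn₁le : ENNReal.ofReal (((2:ℝ)⁻¹) ^ (Nat.find hex)) ≤ diamRho (I i) :=
        not_lt.mp (Nat.find_spec hex)
      have hmlt : m < Nat.find hex := by
        have h1 : ENNReal.ofReal (((2:ℝ)⁻¹) ^ (Nat.find hex))
            < ENNReal.ofReal (((2:ℝ)⁻¹) ^ m) := lt_of_le_of_lt hn₁le (hsmall i)
        have h2 : ((2:ℝ)⁻¹) ^ (Nat.find hex) < ((2:ℝ)⁻¹) ^ m :=
          (ENNReal.ofReal_lt_ofReal_iff (by positivity)).mp h1
        exact (pow_lt_pow_iff_right_of_lt_one₀ (by norm_num) (by norm_num)).mp h2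
      set n : ℕ := Nat.find hex - 1 with hndef
      have hn₁eq : Nat.find hex = n + 1 := by omega
      have hκlt : diamRho (I i) < ENNReal.ofReal (((2:ℝ)⁻¹) ^ n) :=
        not_not.mp (Nat.find_min hex (by omega))
      have hmn : m ≤ n := by omega
      obtain ⟨x₀, hx₀⟩ := hne
      have hsubK : I i ⊆ Kset n x₀ := subset_kset hx₀ hκlt
      -- measure bound
      have hν2 : ν (Kset n x₀) ≤ M1 / ENNReal.ofReal ((2:ℝ) ^ (s * (n:ℝ))) := by
        rw [ENNReal.le_div_iff_mul_le
          (Or.inl (by have : (0:ℝ) < (2:ℝ) ^ (s * (n:ℝ)) := Real.rpow_pos_of_pos (by norm_num) _; positivity))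
          (Or.inl ENNReal.ofReal_ne_top)]
        rw [mul_comm]
        exact hM1b n x₀
      have hdiv : M1 / ENNReal.ofReal ((2:ℝ) ^ (s * (n:ℝ)))
          = M1 * (ENNReal.ofReal ((((2:ℝ)⁻¹) ^ (n+1))) ^ s * ENNReal.ofReal ((2:ℝ) ^ s)) := by
        rw [div_eq_mul_inv]
        congr 1
        rw [← ENNReal.ofReal_inv_of_pos (Real.rpow_pos_of_pos (by norm_num) _)]
        rw [inv_rpow_helper s n]
        rw [ENNReal.ofReal_mul (by positivity), ENNReal.ofReal_rpow_of_pos (by positivity)]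
      have hchain : ENNReal.ofReal ((((2:ℝ)⁻¹) ^ (n+1))) ^ s
          ≤ diamRho (I i) ^ t * q ^ m := by
        calc ENNReal.ofReal ((((2:ℝ)⁻¹) ^ (n+1))) ^ s
            ≤ diamRho (I i) ^ s := by
              refine ENNReal.rpow_le_rpow ?_ (le_of_lt hs)
              rw [← hn₁eq]
              exact hn₁le
          _ = diamRho (I i) ^ t * diamRho (I i) ^ (s - t) := by
              rw [← ENNReal.rpow_add t (s-t) hκ0 hκtop]
              congr 1
              ring
          _ ≤ diamRho (I i) ^ t * (δ m) ^ (s - t) := by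
              refine mul_le_mul_right (ENNReal.rpow_le_rpow ?_ (by linarith)) _
              have hlt : diamRho (I i) < δ m := by
                refine lt_of_lt_of_le hκlt ?_
                rw [hδ]
                exact ENNReal.ofReal_le_ofReal
                  (pow_le_pow_of_le_one (by norm_num) (by norm_num) hmn)
              exact le_of_lt hlt
          _ = diamRho (I i) ^ t * q ^ m := by rw [hδpow]
      calc ν (I i) ≤ ν (Kset n x₀) := measure_mono hsubK
        _ ≤ M1 * (ENNReal.ofReal ((((2:ℝ)⁻¹) ^ (n+1))) ^ s * ENNReal.ofReal ((2:ℝ) ^ s)) := by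
            rw [← hdiv]; exact hν2
        _ ≤ M1 * (diamRho (I i) ^ t * q ^ m * ENNReal.ofReal ((2:ℝ) ^ s)) :=
            mul_le_mul_right (mul_le_mul_left hchain _) _
        _ = (Cst * q ^ m) * diamRho (I i) ^ t := by rw [hCst]; ring
    calc ν E ≤ ν (⋃ i, I i) := measure_mono hcov
      _ ≤ ∑' i, ν (I i) := measure_iUnion_le I
      _ ≤ ∑' i, (Cst * q ^ m) * diamRho (I i) ^ t := ENNReal.tsum_le_tsum hbound
      _ = (Cst * q ^ m) * ∑' i, diamRho (I i) ^ t := ENNReal.tsum_mul_left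
  -- conclude
  have hcq0 : ∀ m : ℕ, Cst * q ^ m ≠ 0 := by
    intro m
    refine mul_ne_zero hCst0 (pow_ne_zero m ?_)
    rw [hq]
    positivity
  have hcqt : ∀ m : ℕ, Cst * q ^ m ≠ ⊤ := by
    intro m
    exact ENNReal.mul_ne_top hCstne (ENNReal.pow_ne_top ENNReal.ofReal_ne_top)
  have hHdelta : ∀ m : ℕ, ν E / (Cst * q ^ m) ≤ Hdelta t (δ m) E := by
    intro m
    refine le_iInf (fun I => le_iInf (fun hcov => le_iInf (fun hsmall => ?_)))
    rw [ENNReal.div_le_iff (hcq0 m) (hcqt m)]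
    rw [mul_comm]
    exact hper m I hcov hsmall
  have hHmeas : ∀ m : ℕ, ν E / (Cst * q ^ m) ≤ Hmeas t E := fun m =>
    le_trans (hHdelta m) (le_iSup₂_of_le (δ m) (hδpos m) le_rfl)
  by_contra hne
  have hfinal : ∀ m : ℕ, ν E ≤ (Hmeas t E * Cst) * q ^ m := by
    intro m
    have := (ENNReal.div_le_iff (hcq0 m) (hcqt m)).mp (hHmeas m)
    calc ν E ≤ Hmeas t E * (Cst * q ^ m) := this
      _ = (Hmeas t E * Cst) * q ^ m := by ring
  have htend : Filter.Tendsto (fun m : ℕ => (Hmeas t E * Cst) * q ^ m)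
      Filter.atTop (nhds 0) := by
    have h1 := ENNReal.Tendsto.const_mul
      (ENNReal.tendsto_pow_atTop_nhds_zero_of_lt_one hq1)
      (a := Hmeas t E * Cst) (Or.inr (ENNReal.mul_ne_top hne hCstne))
    simpa using h1
  have : ν E ≤ 0 := ge_of_tendsto' htend hfinal
  exact absurd (le_antisymm this (zero_le)) (ne_of_gt hνE)


/-- If a nonzero finite nonatomic measure on E satisfies Σ_{k≥1} k^{s-1}(\hatμ(k))² < ∞,
then the Hausdorff dimension of E is at least s. -/
theorem stmt19 (s : ℝ) (hs : 0 < s) (hs1 : s < 1) (E : Set G) (hE : MeasurableSet E)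
    (μ : Measure G) [IsFiniteMeasure μ] (hμ0 : μ ≠ 0) (hna : ∀ x : G, μ {x} = 0)
    (hsupp : μ Eᶜ = 0)
    (hsum : Summable (fun k : ℕ => (k:ℝ) ^ (s - 1) * (muHat μ k) ^ 2)) :
    ENNReal.ofReal s ≤ hdimRho E := by
  have hkey : ∀ t : ℝ, 0 < t → t < s → ENNReal.ofReal t ≤ hdimRho E := fun t ht0 hts =>
    le_iSup₂_of_le t (Hmeas_eq_top hs hs1 E μ hμ0 hna hsupp hsum ht0 hts) le_rfl
  refine ENNReal.le_of_forall_pos_le_add (fun ε hε _ => ?_)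
  have hε' : (0:ℝ) < (ε:ℝ) := hε
  set t : ℝ := max (s - (ε:ℝ)/2) (s/2) with htdef
  have ht0 : 0 < t := lt_of_lt_of_le (by linarith) (le_max_right _ _)
  have hts : t < s := max_lt (by linarith) (by linarith)
  have hst : s ≤ t + (ε:ℝ) := by
    have := le_max_left (s - (ε:ℝ)/2) (s/2)
    linarith
  calc ENNReal.ofReal s ≤ ENNReal.ofReal (t + (ε:ℝ)) := ENNReal.ofReal_le_ofReal hst
    _ = ENNReal.ofReal t + ENNReal.ofReal (ε:ℝ) :=
        ENNReal.ofReal_add (le_of_lt ht0) (le_of_lt hε')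
    _ = ENNReal.ofReal t + (ε : ℝ≥0∞) := by rw [ENNReal.ofReal_coe_nnreal]
    _ ≤ hdimRho E + (ε : ℝ≥0∞) := add_le_add_left (hkey t ht0 hts) _
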